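/- For all x, y ∈ (0,∞): sinh(√(xy))/√(xy) ≤ √((sinh x / x)(sinh y / y)) ≤ sinh(√((x²+y²)/2))/√((x²+y²)/2) ≤ (1/2)(sinh x / x + sinh y / y), with equality in each inequality iff x = y. -/

import Mathlib

open Real Set

/-- helper: if f 0 = 0 and f' > 0 on (0,∞) then f > 0 on (0,∞) -/
lemma pos_of_deriv_pos (f f' : ℝ → ℝ) (hc : ContinuousOn f (Ici 0))
    (hd : ∀ t ∈ Ioi (0:ℝ), HasDerivAt f (f' t) t) (hp : ∀ t ∈ Ioi (0:ℝ), 0 < f' t)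
    (h0 : f 0 = 0) : ∀ t, 0 < t → 0 < f t := by
  have hm : StrictMonoOn f (Ici 0) := by
    apply strictMonoOn_of_deriv_pos (convex_Ici 0) hc
    intro t ht
    rw [interior_Ici] at ht
    rw [(hd t ht).deriv]
    exact hp t ht
  intro t ht
  have := hm (self_mem_Ici) (le_of_lt ht) ht
  rwa [h0] at this

lemma sinh_lt_mul_cosh {u : ℝ} (hu : 0 < u) : Real.sinh u < u * Real.cosh u := by
  have := pos_of_deriv_pos (fun t => t * Real.cosh t - Real.sinh t)
    (fun t => t * Real.sinh t)
    (by fun_prop)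
    (fun t _ => by
      have h1 : HasDerivAt (fun t : ℝ => t * Real.cosh t - Real.sinh t)
          (1 * Real.cosh t + t * Real.sinh t - Real.cosh t) t :=
        ((hasDerivAt_id t).mul (Real.hasDerivAt_cosh t)).sub (Real.hasDerivAt_sinh t)
      simpa using h1.congr_deriv (by ring))
    (fun t ht => mul_pos ht (Real.sinh_pos_iff.mpr ht))
    (by simp)
  have h2 := this u hu; linarith

lemma T_strictMono : StrictMonoOn (fun t : ℝ => t * Real.cosh t / Real.sinh t) (Ioi 0) := by
  apply strictMonoOn_of_deriv_pos (convex_Ioi 0)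
  · apply ContinuousOn.div (by fun_prop) (by fun_prop)
    intro t ht
    exact ne_of_gt (Real.sinh_pos_iff.mpr ht)
  · intro t ht
    rw [interior_Ioi] at ht
    have hs : Real.sinh t ≠ 0 := ne_of_gt (Real.sinh_pos_iff.mpr ht)
    have h1 : HasDerivAt (fun t : ℝ => t * Real.cosh t / Real.sinh t)
        (((1 * Real.cosh t + t * Real.sinh t) * Real.sinh t - t * Real.cosh t * Real.cosh t)
          / (Real.sinh t) ^ 2) t :=
      ((hasDerivAt_id t).mul (Real.hasDerivAt_cosh t)).div (Real.hasDerivAt_sinh t) hs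
    rw [h1.deriv]
    apply div_pos
    · have h2 := Real.cosh_sq t
      have h3 := Real.self_lt_sinh_iff.mpr ht
      have h4 : (1:ℝ) ≤ Real.cosh t := Real.one_le_cosh t
      have h5 : 0 < Real.sinh t := Real.sinh_pos_iff.mpr ht
      nlinarith
    · positivity

/-- h(v) = log (sinh (exp v)) - v is strictly convex on ℝ -/
lemma h_strictConvex : StrictConvexOn ℝ univ (fun v : ℝ => Real.log (Real.sinh (Real.exp v)) - v) := by
  have hderiv : ∀ v : ℝ, HasDerivAt (fun v : ℝ => Real.log (Real.sinh (Real.exp v)) - v)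
      (Real.exp v * Real.cosh (Real.exp v) / Real.sinh (Real.exp v) - 1) v := by
    intro v
    have hs : Real.sinh (Real.exp v) ≠ 0 := ne_of_gt (Real.sinh_pos_iff.mpr (Real.exp_pos v))
    have h1 : HasDerivAt (fun v : ℝ => Real.sinh (Real.exp v))
        (Real.cosh (Real.exp v) * Real.exp v) v :=
      (Real.hasDerivAt_sinh _).comp v (Real.hasDerivAt_exp v)
    have h2 := (h1.log hs).sub (hasDerivAt_id v)
    exact h2.congr_deriv (by field_simp)
  apply StrictMono.strictConvexOn_univ_of_deriv
  · have : Continuous fun v : ℝ => Real.log (Real.sinh (Real.exp v)) := by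
      apply Real.continuous_sinh.comp Real.continuous_exp |>.log
      intro v
      exact ne_of_gt (Real.sinh_pos_iff.mpr (Real.exp_pos v))
    fun_prop
  · intro a b hab
    rw [(hderiv a).deriv, (hderiv b).deriv]
    have := T_strictMono (mem_Ioi.mpr (Real.exp_pos a)) (mem_Ioi.mpr (Real.exp_pos b))
      (Real.exp_lt_exp.mpr hab)
    simp only [] at this
    linarith

lemma p_pos {u : ℝ} (hu : 0 < u) :
    0 < u^2 * Real.sinh u + 3 * Real.sinh u - 3 * u * Real.cosh u := by
  have := pos_of_deriv_pos
    (fun t => t^2 * Real.sinh t + 3 * Real.sinh t - 3 * t * Real.cosh t)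
    (fun t => t^2 * Real.cosh t - t * Real.sinh t)
    (by fun_prop)
    (fun t _ => by
      have h1 : HasDerivAt (fun t : ℝ => t^2 * Real.sinh t + 3 * Real.sinh t - 3 * t * Real.cosh t)
          ((2*t) * Real.sinh t + t^2 * Real.cosh t + 3 * Real.cosh t
            - (3 * Real.cosh t + 3 * t * Real.sinh t)) t := by
        have ha : HasDerivAt (fun t : ℝ => t^2) (2*t) t := by
          simpa using (hasDerivAt_pow 2 t)
        have hb := (ha.mul (Real.hasDerivAt_sinh t)).add
          ((Real.hasDerivAt_sinh t).const_mul 3)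
        have hc := ((hasDerivAt_id t).const_mul (3:ℝ)).mul (Real.hasDerivAt_cosh t)
        have hd := hb.sub hc
        simp only [id_eq] at hd hc
        exact hd.congr_deriv (by ring)
      exact h1.congr_deriv (by ring)
    )
    (fun t ht => by
      rw [mem_Ioi] at ht
      show 0 < t^2 * Real.cosh t - t * Real.sinh t
      have := sinh_lt_mul_cosh ht
      have hs : 0 < Real.sinh t := Real.sinh_pos_iff.mpr ht
      nlinarith)
    (by simp)
  have h2 := this u hu
  simpa using h2

lemma rho_strictMono :
    StrictMonoOn (fun u : ℝ => (u * Real.cosh u - Real.sinh u) / (2 * u^3)) (Ioi 0) := by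
  apply strictMonoOn_of_deriv_pos (convex_Ioi 0)
  · apply ContinuousOn.div (by fun_prop) (by fun_prop)
    intro t ht
    rw [mem_Ioi] at ht
    positivity
  · intro u hu
    rw [interior_Ioi, mem_Ioi] at hu
    have hd : HasDerivAt (fun u : ℝ => (u * Real.cosh u - Real.sinh u) / (2 * u^3))
        (((1 * Real.cosh u + u * Real.sinh u - Real.cosh u) * (2 * u^3)
          - (u * Real.cosh u - Real.sinh u) * (2 * (3 * u^2))) / (2 * u^3)^2) u := by
      have hn : HasDerivAt (fun u : ℝ => u * Real.cosh u - Real.sinh u)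
          (1 * Real.cosh u + u * Real.sinh u - Real.cosh u) u :=
        ((hasDerivAt_id u).mul (Real.hasDerivAt_cosh u)).sub (Real.hasDerivAt_sinh u)
      have hden : HasDerivAt (fun u : ℝ => 2 * u^3) (2 * (3 * u^2)) u := by
        have := hasDerivAt_pow 3 u
        have h2 := this.const_mul (2:ℝ)
        simpa using h2.congr_deriv (by push_cast; ring)
      exact hn.div hden (by positivity)
    rw [hd.deriv]
    apply div_pos
    · have hp := p_pos hu
      have key : (1 * Real.cosh u + u * Real.sinh u - Real.cosh u) * (2 * u^3)
          - (u * Real.cosh u - Real.sinh u) * (2 * (3 * u^2))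
          = 2 * u^2 * (u^2 * Real.sinh u + 3 * Real.sinh u - 3 * u * Real.cosh u) := by ring
      rw [key]
      exact mul_pos (by positivity) hp
    · positivity

lemma g_strictConvex :
    StrictConvexOn ℝ (Ioi 0) (fun w : ℝ => Real.sinh (Real.sqrt w) / Real.sqrt w) := by
  have hder : ∀ w ∈ Ioi (0:ℝ), HasDerivAt (fun w : ℝ => Real.sinh (Real.sqrt w) / Real.sqrt w)
      ((Real.sqrt w * Real.cosh (Real.sqrt w) - Real.sinh (Real.sqrt w)) / (2 * (Real.sqrt w)^3)) w := by
    intro w hw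
    rw [mem_Ioi] at hw
    have hsq : Real.sqrt w ≠ 0 := ne_of_gt (Real.sqrt_pos.mpr hw)
    have hs : HasDerivAt Real.sqrt (1 / (2 * Real.sqrt w)) w := Real.hasDerivAt_sqrt (ne_of_gt hw)
    have hnum : HasDerivAt (fun w : ℝ => Real.sinh (Real.sqrt w))
        (Real.cosh (Real.sqrt w) * (1 / (2 * Real.sqrt w))) w :=
      (Real.hasDerivAt_sinh _).comp w hs
    have hq := hnum.div hs hsq
    apply hq.congr_deriv
    have h2 : Real.sqrt w ^ 2 = w := Real.sq_sqrt hw.le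
    field_simp
  apply StrictMonoOn.strictConvexOn_of_deriv (convex_Ioi 0)
  · apply ContinuousOn.div (by fun_prop) (by fun_prop)
    intro t ht
    rw [mem_Ioi] at ht
    exact ne_of_gt (Real.sqrt_pos.mpr ht)
  · rw [interior_Ioi]
    intro a ha b hb hab
    rw [(hder a ha).deriv, (hder b hb).deriv]
    rw [mem_Ioi] at ha hb
    exact rho_strictMono (mem_Ioi.mpr (Real.sqrt_pos.mpr ha)) (mem_Ioi.mpr (Real.sqrt_pos.mpr hb))
      ((Real.sqrt_lt_sqrt ha.le hab))

-- F2 = 4*u*sinh u*cosh u - 4*sinh u^2 > 0 for u > 0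
lemma F2_pos {u : ℝ} (hu : 0 < u) :
    0 < 4 * (u * Real.sinh u * Real.cosh u) - 4 * Real.sinh u ^ 2 := by
  have := pos_of_deriv_pos
    (fun t => 4 * (t * Real.sinh t * Real.cosh t) - 4 * Real.sinh t ^ 2)
    (fun t => 4 * t * Real.cosh t ^ 2 + 4 * t * Real.sinh t ^ 2 - 4 * Real.sinh t * Real.cosh t)
    (by fun_prop)
    (fun t ht => by
      rw [mem_Ioi] at ht
      have h1 : HasDerivAt (fun t : ℝ => t * Real.sinh t * Real.cosh t)
          ((1 * Real.sinh t + t * Real.cosh t) * Real.cosh t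
            + t * Real.sinh t * Real.sinh t) t :=
        ((hasDerivAt_id t).mul (Real.hasDerivAt_sinh t)).mul (Real.hasDerivAt_cosh t)
      have h2 : HasDerivAt (fun t : ℝ => Real.sinh t ^ 2)
          (2 * Real.sinh t ^ 1 * Real.cosh t) t := by
        have := (hasDerivAt_pow 2 (Real.sinh t)).comp t (Real.hasDerivAt_sinh t)
        exact this.congr_deriv (by simp)
      have h3 := (h1.const_mul (4:ℝ)).sub (h2.const_mul (4:ℝ))
      exact h3.congr_deriv (by ring))
    (fun t ht => by
      rw [mem_Ioi] at ht
      show 0 < 4 * t * Real.cosh t ^ 2 + 4 * t * Real.sinh t ^ 2 - 4 * Real.sinh t * Real.cosh t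
      have hB := sinh_lt_mul_cosh ht
      have hc : 0 < Real.cosh t := Real.cosh_pos t
      have hs : 0 < Real.sinh t := Real.sinh_pos_iff.mpr ht
      nlinarith [mul_lt_mul_of_pos_right hB hc, mul_pos (mul_pos ht hs) hs])
    (by simp)
  exact this u hu

-- F1 > 0
lemma F1_pos {u : ℝ} (hu : 0 < u) :
    0 < u * Real.cosh u ^ 2 + u * Real.sinh u ^ 2 + 2 * u - 3 * (Real.sinh u * Real.cosh u) := by
  have := pos_of_deriv_pos
    (fun t => t * Real.cosh t ^ 2 + t * Real.sinh t ^ 2 + 2 * t - 3 * (Real.sinh t * Real.cosh t))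
    (fun t => 4 * (t * Real.sinh t * Real.cosh t) - 4 * Real.sinh t ^ 2)
    (by fun_prop)
    (fun t ht => by
      have hc2 : HasDerivAt (fun t : ℝ => Real.cosh t ^ 2)
          (2 * Real.cosh t ^ 1 * Real.sinh t) t := by
        have := (hasDerivAt_pow 2 (Real.cosh t)).comp t (Real.hasDerivAt_cosh t)
        exact this.congr_deriv (by simp)
      have hs2 : HasDerivAt (fun t : ℝ => Real.sinh t ^ 2)
          (2 * Real.sinh t ^ 1 * Real.cosh t) t := by
        have := (hasDerivAt_pow 2 (Real.sinh t)).comp t (Real.hasDerivAt_sinh t)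
        exact this.congr_deriv (by simp)
      have h1 := (hasDerivAt_id t).mul hc2
      have h2 := (hasDerivAt_id t).mul hs2
      have h3 := ((hasDerivAt_id t).const_mul (2:ℝ))
      have h4 := (Real.hasDerivAt_sinh t).mul (Real.hasDerivAt_cosh t)
      have h5 := ((h1.add h2).add h3).sub (h4.const_mul (3:ℝ))
      simp only [id_eq] at h5
      exact h5.congr_deriv (by linear_combination (-2 : ℝ) * Real.cosh_sq t))
    (fun t ht => F2_pos (mem_Ioi.mp ht))
    (by simp)
  exact this u hu

-- key inequality K
lemma K_ineq {u : ℝ} (hu : 0 < u) :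
    2 * Real.sinh u ^ 2 < u * Real.sinh u * Real.cosh u + u ^ 2 := by
  have := pos_of_deriv_pos
    (fun t => t * Real.sinh t * Real.cosh t + t ^ 2 - 2 * Real.sinh t ^ 2)
    (fun t => t * Real.cosh t ^ 2 + t * Real.sinh t ^ 2 + 2 * t - 3 * (Real.sinh t * Real.cosh t))
    (by fun_prop)
    (fun t ht => by
      have h1 : HasDerivAt (fun t : ℝ => t * Real.sinh t * Real.cosh t)
          ((1 * Real.sinh t + t * Real.cosh t) * Real.cosh t
            + t * Real.sinh t * Real.sinh t) t :=
        ((hasDerivAt_id t).mul (Real.hasDerivAt_sinh t)).mul (Real.hasDerivAt_cosh t)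
      have hs2 : HasDerivAt (fun t : ℝ => Real.sinh t ^ 2)
          (2 * Real.sinh t ^ 1 * Real.cosh t) t := by
        have := (hasDerivAt_pow 2 (Real.sinh t)).comp t (Real.hasDerivAt_sinh t)
        exact this.congr_deriv (by simp)
      have hp2 : HasDerivAt (fun t : ℝ => t ^ 2) (2 * t) t := by
        simpa using hasDerivAt_pow 2 t
      have h5 := (h1.add hp2).sub (hs2.const_mul (2:ℝ))
      exact h5.congr_deriv (by ring))
    (fun t ht => F1_pos (mem_Ioi.mp ht))
    (by simp)
  have h := this u hu
  linarith

lemma phi_strictAnti :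
    StrictAntiOn (fun u : ℝ => (u * Real.cosh u - Real.sinh u) / (2 * u^2 * Real.sinh u))
      (Ioi 0) := by
  apply strictAntiOn_of_deriv_neg (convex_Ioi 0)
  · apply ContinuousOn.div (by fun_prop) (by fun_prop)
    intro t ht
    rw [mem_Ioi] at ht
    have : 0 < Real.sinh t := Real.sinh_pos_iff.mpr ht
    positivity
  · intro u hu
    rw [interior_Ioi, mem_Ioi] at hu
    have hs : 0 < Real.sinh u := Real.sinh_pos_iff.mpr hu
    have hd : HasDerivAt (fun u : ℝ => (u * Real.cosh u - Real.sinh u) / (2 * u^2 * Real.sinh u))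
        (((1 * Real.cosh u + u * Real.sinh u - Real.cosh u) * (2 * u^2 * Real.sinh u)
          - (u * Real.cosh u - Real.sinh u) * (2 * (2 * u) * Real.sinh u + 2 * u^2 * Real.cosh u))
          / (2 * u^2 * Real.sinh u)^2) u := by
      have hn : HasDerivAt (fun u : ℝ => u * Real.cosh u - Real.sinh u)
          (1 * Real.cosh u + u * Real.sinh u - Real.cosh u) u :=
        ((hasDerivAt_id u).mul (Real.hasDerivAt_cosh u)).sub (Real.hasDerivAt_sinh u)
      have hp2 : HasDerivAt (fun u : ℝ => 2 * u^2) (2 * (2 * u)) u := by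
        have := (hasDerivAt_pow 2 u).const_mul (2:ℝ)
        simpa using this.congr_deriv (by push_cast; ring)
      have hden := hp2.mul (Real.hasDerivAt_sinh u)
      exact hn.div hden (by positivity)
    rw [hd.deriv]
    apply div_neg_of_neg_of_pos
    · have hK := K_ineq hu
      have key : (1 * Real.cosh u + u * Real.sinh u - Real.cosh u) * (2 * u^2 * Real.sinh u)
          - (u * Real.cosh u - Real.sinh u) * (2 * (2 * u) * Real.sinh u + 2 * u^2 * Real.cosh u)
          = 2 * u * (2 * Real.sinh u ^ 2 - u * Real.sinh u * Real.cosh u - u ^ 2) := by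
        linear_combination (-2 * u^3 : ℝ) * Real.cosh_sq u
      rw [key]
      have : 2 * Real.sinh u ^ 2 - u * Real.sinh u * Real.cosh u - u ^ 2 < 0 := by linarith
      exact mul_neg_of_pos_of_neg (by positivity) this
    · positivity

lemma G_strictConcave :
    StrictConcaveOn ℝ (Ioi 0)
      (fun w : ℝ => Real.log (Real.sinh (Real.sqrt w)) - Real.log (Real.sqrt w)) := by
  have hder : ∀ w ∈ Ioi (0:ℝ),
      HasDerivAt (fun w : ℝ => Real.log (Real.sinh (Real.sqrt w)) - Real.log (Real.sqrt w))
        ((Real.sqrt w * Real.cosh (Real.sqrt w) - Real.sinh (Real.sqrt w))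
          / (2 * (Real.sqrt w)^2 * Real.sinh (Real.sqrt w))) w := by
    intro w hw
    rw [mem_Ioi] at hw
    have hsq : 0 < Real.sqrt w := Real.sqrt_pos.mpr hw
    have hsh : 0 < Real.sinh (Real.sqrt w) := Real.sinh_pos_iff.mpr hsq
    have hs : HasDerivAt Real.sqrt (1 / (2 * Real.sqrt w)) w := Real.hasDerivAt_sqrt (ne_of_gt hw)
    have h1 : HasDerivAt (fun w : ℝ => Real.sinh (Real.sqrt w))
        (Real.cosh (Real.sqrt w) * (1 / (2 * Real.sqrt w))) w :=
      (Real.hasDerivAt_sinh _).comp w hs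
    have h2 := (h1.log (ne_of_gt hsh)).sub (hs.log (ne_of_gt hsq))
    apply h2.congr_deriv
    have hq : Real.sqrt w ^ 2 = w := Real.sq_sqrt hw.le
    field_simp
  apply StrictAntiOn.strictConcaveOn_of_deriv (convex_Ioi 0)
  · apply ContinuousOn.sub
    · apply ContinuousOn.log (by fun_prop)
      intro t ht
      rw [mem_Ioi] at ht
      exact ne_of_gt (Real.sinh_pos_iff.mpr (Real.sqrt_pos.mpr ht))
    · apply ContinuousOn.log (by fun_prop)
      intro t ht
      rw [mem_Ioi] at ht
      exact ne_of_gt (Real.sqrt_pos.mpr ht)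
  · rw [interior_Ioi]
    intro a ha b hb hab
    rw [(hder a ha).deriv, (hder b hb).deriv]
    rw [mem_Ioi] at ha hb
    exact phi_strictAnti (mem_Ioi.mpr (Real.sqrt_pos.mpr ha)) (mem_Ioi.mpr (Real.sqrt_pos.mpr hb))
      (Real.sqrt_lt_sqrt ha.le hab)

lemma part1 (x y : ℝ) (hx : 0 < x) (hy : 0 < y) :
    Real.sinh (Real.sqrt (x * y)) / Real.sqrt (x * y) ≤
        Real.sqrt (Real.sinh x / x * (Real.sinh y / y)) ∧
      (Real.sinh (Real.sqrt (x * y)) / Real.sqrt (x * y) =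
          Real.sqrt (Real.sinh x / x * (Real.sinh y / y)) ↔ x = y) := by
  set h : ℝ → ℝ := fun v => Real.log (Real.sinh (Real.exp v)) - v with hh
  have hexp : ∀ v : ℝ, Real.exp (h v) = Real.sinh (Real.exp v) / Real.exp v := by
    intro v
    rw [hh]
    rw [Real.exp_sub, Real.exp_log (Real.sinh_pos_iff.mpr (Real.exp_pos v))]
  set a := Real.log x with ha
  set b := Real.log y with hb
  have hea : Real.exp a = x := Real.exp_log hx
  have heb : Real.exp b = y := Real.exp_log hy
  have hm : Real.exp ((a + b) / 2) = Real.sqrt (x * y) := by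
    rw [Real.exp_half, Real.exp_add, hea, heb]
  have hRHS : Real.exp ((h a + h b)/2) = Real.sqrt (Real.sinh x / x * (Real.sinh y / y)) := by
    rw [Real.exp_half, Real.exp_add, hexp, hexp, hea, heb]
  have hLHS : Real.exp (h ((a+b)/2)) = Real.sinh (Real.sqrt (x*y)) / Real.sqrt (x*y) := by
    rw [hexp, hm]
  constructor
  · rw [← hLHS, ← hRHS]
    apply Real.exp_le_exp.mpr
    have hconv := h_strictConvex.convexOn.2 (mem_univ a) (mem_univ b)
      (by norm_num : (0:ℝ) ≤ 1/2) (by norm_num : (0:ℝ) ≤ 1/2) (by norm_num)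
    simp only [smul_eq_mul] at hconv
    have he : (1/2 : ℝ) * a + (1/2 : ℝ) * b = (a+b)/2 := by ring
    rw [he] at hconv
    have := hconv
    rw [hh] at *
    linarith [this]
  · constructor
    · intro heq
      by_contra hne
      have hab : a ≠ b := fun hc => hne (by rw [← hea, ← heb, hc])
      have hconv := h_strictConvex.2 (mem_univ a) (mem_univ b) hab
        (by norm_num : (0:ℝ) < 1/2) (by norm_num : (0:ℝ) < 1/2) (by norm_num)
      simp only [smul_eq_mul] at hconv
      have he : (1/2 : ℝ) * a + (1/2 : ℝ) * b = (a+b)/2 := by ring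
      rw [he] at hconv
      have hstrict : h ((a+b)/2) < (h a + h b)/2 := by
        rw [hh]; simp only []; linarith [hconv]
      have := Real.exp_lt_exp.mpr hstrict
      rw [hLHS, hRHS] at this
      exact absurd heq (ne_of_lt this)
    · intro heq
      subst heq
      rw [Real.sqrt_mul_self hx.le, Real.sqrt_mul_self (by positivity : (0:ℝ) ≤ Real.sinh x / x)]

lemma part3 (x y : ℝ) (hx : 0 < x) (hy : 0 < y) :
    Real.sinh (Real.sqrt ((x ^ 2 + y ^ 2) / 2)) / Real.sqrt ((x ^ 2 + y ^ 2) / 2) ≤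
        (Real.sinh x / x + Real.sinh y / y) / 2 ∧
      (Real.sinh (Real.sqrt ((x ^ 2 + y ^ 2) / 2)) / Real.sqrt ((x ^ 2 + y ^ 2) / 2) =
          (Real.sinh x / x + Real.sinh y / y) / 2 ↔ x = y) := by
  set g : ℝ → ℝ := fun w => Real.sinh (Real.sqrt w) / Real.sqrt w with hg
  have hgx : g (x^2) = Real.sinh x / x := by rw [hg]; simp [Real.sqrt_sq hx.le]
  have hgy : g (y^2) = Real.sinh y / y := by rw [hg]; simp [Real.sqrt_sq hy.le]
  have hxm : x^2 ∈ Ioi (0:ℝ) := by rw [mem_Ioi]; positivity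
  have hym : y^2 ∈ Ioi (0:ℝ) := by rw [mem_Ioi]; positivity
  have hmid : ∀ (a b : ℝ), (1/2:ℝ) • a + (1/2:ℝ) • b = (a + b)/2 := by
    intro a b; simp [smul_eq_mul]; ring
  constructor
  · have hconv := g_strictConvex.convexOn.2 hxm hym
      (by norm_num : (0:ℝ) ≤ 1/2) (by norm_num : (0:ℝ) ≤ 1/2) (by norm_num)
    rw [hmid] at hconv
    calc Real.sinh (Real.sqrt ((x ^ 2 + y ^ 2) / 2)) / Real.sqrt ((x ^ 2 + y ^ 2) / 2)
        = g ((x^2 + y^2)/2) := rfl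
      _ ≤ (1/2:ℝ) • g (x^2) + (1/2:ℝ) • g (y^2) := hconv
      _ = (Real.sinh x / x + Real.sinh y / y) / 2 := by
          rw [hgx, hgy]; simp [smul_eq_mul]; ring
  · constructor
    · intro heq
      by_contra hne
      have hab : x^2 ≠ y^2 := by
        intro hc
        exact hne (by nlinarith)
      have hconv := g_strictConvex.2 hxm hym hab
        (by norm_num : (0:ℝ) < 1/2) (by norm_num : (0:ℝ) < 1/2) (by norm_num)
      rw [hmid] at hconv
      have : g ((x^2+y^2)/2) < (Real.sinh x / x + Real.sinh y / y)/2 := by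
        calc g ((x^2+y^2)/2) < (1/2:ℝ) • g (x^2) + (1/2:ℝ) • g (y^2) := hconv
          _ = (Real.sinh x / x + Real.sinh y / y) / 2 := by
              rw [hgx, hgy]; simp [smul_eq_mul]; ring
      exact absurd heq (ne_of_lt this)
    · intro heq
      subst heq
      have : (x^2 + x^2)/2 = x^2 := by ring
      rw [this, Real.sqrt_sq hx.le]
      ring

lemma part2 (x y : ℝ) (hx : 0 < x) (hy : 0 < y) :
    Real.sqrt (Real.sinh x / x * (Real.sinh y / y)) ≤
        Real.sinh (Real.sqrt ((x ^ 2 + y ^ 2) / 2)) / Real.sqrt ((x ^ 2 + y ^ 2) / 2) ∧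
      (Real.sqrt (Real.sinh x / x * (Real.sinh y / y)) =
          Real.sinh (Real.sqrt ((x ^ 2 + y ^ 2) / 2)) / Real.sqrt ((x ^ 2 + y ^ 2) / 2)
        ↔ x = y) := by
  set G : ℝ → ℝ := fun w => Real.log (Real.sinh (Real.sqrt w)) - Real.log (Real.sqrt w) with hG
  have hexp : ∀ w : ℝ, 0 < w → Real.exp (G w) = Real.sinh (Real.sqrt w) / Real.sqrt w := by
    intro w hw
    have hsq : 0 < Real.sqrt w := Real.sqrt_pos.mpr hw
    rw [hG]
    rw [Real.exp_sub, Real.exp_log (Real.sinh_pos_iff.mpr hsq), Real.exp_log hsq]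
  have hxm : x^2 ∈ Ioi (0:ℝ) := by rw [mem_Ioi]; positivity
  have hym : y^2 ∈ Ioi (0:ℝ) := by rw [mem_Ioi]; positivity
  have hmpos : (0:ℝ) < (x^2 + y^2)/2 := by positivity
  have hGx : Real.exp (G (x^2)) = Real.sinh x / x := by
    rw [hexp _ (by positivity), Real.sqrt_sq hx.le]
  have hGy : Real.exp (G (y^2)) = Real.sinh y / y := by
    rw [hexp _ (by positivity), Real.sqrt_sq hy.le]
  have hRHSeq : Real.exp ((G (x^2) + G (y^2))/2)
      = Real.sqrt (Real.sinh x / x * (Real.sinh y / y)) := by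
    rw [Real.exp_half, Real.exp_add, hGx, hGy]
  have hmid : (1/2:ℝ) • (x^2) + (1/2:ℝ) • (y^2) = (x^2 + y^2)/2 := by
    simp [smul_eq_mul]; ring
  constructor
  · have hconc := G_strictConcave.concaveOn.2 hxm hym
      (by norm_num : (0:ℝ) ≤ 1/2) (by norm_num : (0:ℝ) ≤ 1/2) (by norm_num)
    rw [hmid] at hconc
    have h2 : (G (x^2) + G (y^2))/2 ≤ G ((x^2+y^2)/2) := by
      simp only [smul_eq_mul, hG] at hconc ⊢
      linarith [hconc]
    calc Real.sqrt (Real.sinh x / x * (Real.sinh y / y))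
        = Real.exp ((G (x^2) + G (y^2))/2) := hRHSeq.symm
      _ ≤ Real.exp (G ((x^2+y^2)/2)) := Real.exp_le_exp.mpr h2
      _ = _ := hexp _ hmpos
  · constructor
    · intro heq
      by_contra hne
      have hab : x^2 ≠ y^2 := fun hc => hne (by nlinarith)
      have hconc := G_strictConcave.2 hxm hym hab
        (by norm_num : (0:ℝ) < 1/2) (by norm_num : (0:ℝ) < 1/2) (by norm_num)
      rw [hmid] at hconc
      have h2 : (G (x^2) + G (y^2))/2 < G ((x^2+y^2)/2) := by
        simp only [smul_eq_mul, hG] at hconc ⊢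
        linarith [hconc]
      have := Real.exp_lt_exp.mpr h2
      rw [hRHSeq, hexp _ hmpos] at this
      exact absurd heq (ne_of_lt this)
    · intro heq
      subst heq
      have hm2 : (x^2 + x^2)/2 = x^2 := by ring
      rw [hm2, Real.sqrt_sq hx.le,
        Real.sqrt_mul_self (by positivity : (0:ℝ) ≤ Real.sinh x / x)]

/-- for positive `x, y`:
`sinh√(xy)/√(xy) ≤ √((sinh x/x)(sinh y/y)) ≤ sinh√((x²+y²)/2)/√((x²+y²)/2)
  ≤ ((sinh x/x) + (sinh y/y))/2`, with equality in each inequality iff `x = y`. -/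
theorem stmt18 (x y : ℝ) (hx : 0 < x) (hy : 0 < y) :
    (Real.sinh (Real.sqrt (x * y)) / Real.sqrt (x * y) ≤
        Real.sqrt (Real.sinh x / x * (Real.sinh y / y)) ∧
      (Real.sinh (Real.sqrt (x * y)) / Real.sqrt (x * y) =
          Real.sqrt (Real.sinh x / x * (Real.sinh y / y)) ↔ x = y)) ∧
    (Real.sqrt (Real.sinh x / x * (Real.sinh y / y)) ≤
        Real.sinh (Real.sqrt ((x ^ 2 + y ^ 2) / 2)) / Real.sqrt ((x ^ 2 + y ^ 2) / 2) ∧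
      (Real.sqrt (Real.sinh x / x * (Real.sinh y / y)) =
          Real.sinh (Real.sqrt ((x ^ 2 + y ^ 2) / 2)) / Real.sqrt ((x ^ 2 + y ^ 2) / 2)
        ↔ x = y)) ∧
    (Real.sinh (Real.sqrt ((x ^ 2 + y ^ 2) / 2)) / Real.sqrt ((x ^ 2 + y ^ 2) / 2) ≤
        (Real.sinh x / x + Real.sinh y / y) / 2 ∧
      (Real.sinh (Real.sqrt ((x ^ 2 + y ^ 2) / 2)) / Real.sqrt ((x ^ 2 + y ^ 2) / 2) =
          (Real.sinh x / x + Real.sinh y / y) / 2 ↔ x = y)) := by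
  exact ⟨part1 x y hx hy, part2 x y hx hy, part3 x y hx hy⟩
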